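/- Let F be a field and n > 1. Suppose every nonscalar matrix in M_n(F) has a nontrivial hyperinvariant subspace. Then for every k > 1 dividing n, every polynomial of degree k over F is reducible over F (i.e., F is k-closed for all such k). -/

import Mathlib

/-- If every nonscalar matrix in `M_n(F)` has a nontrivial
hyperinvariant subspace, then `F` is `k`-closed for every divisor `k > 1` of `n`:
every polynomial of degree `k` over `F` is reducible. -/
theorem stmt9 {F : Type*} [Field F] {n : ℕ} (hn : 1 < n)
    (hyp : ∀ A : Matrix (Fin n) (Fin n) F,
      (¬ ∃ c : F, A = c • (1 : Matrix (Fin n) (Fin n) F)) →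
      ∃ W : Submodule F (Fin n → F), W ≠ ⊥ ∧ W ≠ ⊤ ∧
        ∀ B : Matrix (Fin n) (Fin n) F, A * B = B * A → ∀ x ∈ W, B.mulVec x ∈ W) :
    ∀ k : ℕ, 1 < k → k ∣ n → ∀ f : Polynomial F, f.natDegree = k → ¬ Irreducible f := by
  intro k hk hkn f hdeg hirr
  have hf0 : f ≠ 0 := fun h => by simp [h] at hdeg; omega
  haveI : Fact (Irreducible f) := ⟨hirr⟩
  haveI : FiniteDimensional F (AdjoinRoot f) :=
    Module.Finite.of_basis (AdjoinRoot.powerBasis hf0).basis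
  have hKrank : Module.finrank F (AdjoinRoot f) = k := by
    rw [(AdjoinRoot.powerBasis hf0).finrank, AdjoinRoot.powerBasis_dim, hdeg]
  set m := n / k with hm
  have hmk : m * k = n := Nat.div_mul_cancel hkn
  have hm0 : 0 < m := Nat.div_pos (Nat.le_of_dvd (by omega) hkn) (by omega)
  have hVrank : Module.finrank F (Fin m → AdjoinRoot f) = n := by
    rw [Module.finrank_pi_fintype, hKrank]
    simp [Finset.sum_const, hmk, mul_comm]
  have e : (Fin m → AdjoinRoot f) ≃ₗ[F] (Fin n → F) :=
    LinearEquiv.ofFinrankEq _ _ (by rw [hVrank, Module.finrank_pi]; simp)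
  set T : (Fin m → AdjoinRoot f) →ₗ[F] (Fin m → AdjoinRoot f) :=
    ((LinearMap.lsmul (AdjoinRoot f) (Fin m → AdjoinRoot f)
      (AdjoinRoot.root f)).restrictScalars F) with hT
  set L : (Fin n → F) →ₗ[F] (Fin n → F) :=
    e.toLinearMap ∘ₗ T ∘ₗ e.symm.toLinearMap with hL
  set A : Matrix (Fin n) (Fin n) F := LinearMap.toMatrix' L with hA
  have hmulVec : ∀ x, A.mulVec x = L x := by
    intro x
    rw [hA, ← Matrix.toLin'_apply, Matrix.toLin'_toMatrix']
  -- A is nonscalar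
  have hns : ¬ ∃ c : F, A = c • (1 : Matrix (Fin n) (Fin n) F) := by
    rintro ⟨c, hc⟩
    have h1 : ∀ x, L x = c • x := by
      intro x
      rw [hc] at hmulVec
      have := hmulVec x
      rw [Matrix.smul_mulVec, Matrix.one_mulVec] at this
      exact this.symm
    have hαc : AdjoinRoot.root f = algebraMap F (AdjoinRoot f) c := by
      have h4 := h1 (e (fun _ => (1 : AdjoinRoot f)))
      simp only [hL, LinearMap.comp_apply, LinearEquiv.coe_coe] at h4
      rw [e.symm_apply_apply] at h4
      have h2 := congrArg e.symm h4
      rw [e.symm_apply_apply, map_smul, e.symm_apply_apply] at h2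
      have h2' : (AdjoinRoot.root f • (fun _ => (1 : AdjoinRoot f)) : Fin m → AdjoinRoot f)
          = (c • (fun _ => (1 : AdjoinRoot f)) : Fin m → AdjoinRoot f) := by
        simpa only [hT, LinearMap.coe_restrictScalars, LinearMap.lsmul_apply] using h2
      have h3 := congrFun h2' ⟨0, hm0⟩
      simp only [Pi.smul_apply, smul_eq_mul, mul_one] at h3
      rw [h3, Algebra.smul_def, mul_one]
    have hroot : f.eval c = 0 := by
      have h0 : Polynomial.aeval (AdjoinRoot.root f) f = 0 := by
        rw [Polynomial.aeval_def, AdjoinRoot.algebraMap_eq]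
        exact AdjoinRoot.eval₂_root f
      rw [hαc, Polynomial.aeval_algebraMap_apply] at h0
      have := (map_eq_zero_iff (algebraMap F (AdjoinRoot f))
        (algebraMap F (AdjoinRoot f)).injective).mp (by simpa using h0)
      simpa using this
    have hdvd : Polynomial.X - Polynomial.C c ∣ f := Polynomial.dvd_iff_isRoot.mpr hroot
    obtain ⟨g, hg⟩ := hdvd
    rcases hirr.isUnit_or_isUnit hg with h | h
    · exact Polynomial.not_isUnit_X_sub_C c h
    · have hg0 : g ≠ 0 := fun h0 => by simp [h0] at hg; exact hf0 hg
      have : f.natDegree = 1 := by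
        rw [hg, Polynomial.natDegree_mul (Polynomial.X_sub_C_ne_zero c) hg0,
          Polynomial.natDegree_X_sub_C, Polynomial.natDegree_eq_zero_of_isUnit h]
      omega
  obtain ⟨W, hWbot, hWtop, hWinv⟩ := hyp A hns
  apply hWtop
  obtain ⟨x, hxW, hx0⟩ := Submodule.exists_mem_ne_zero_of_ne_bot hWbot
  rw [Submodule.eq_top_iff']
  intro y
  set w : Fin m → AdjoinRoot f := e.symm x with hw
  have hw0 : w ≠ 0 := fun h => hx0 (by rw [← e.apply_symm_apply x, ← hw, h, map_zero])
  obtain ⟨i₀, hi₀⟩ : ∃ i, w i ≠ 0 := by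
    by_contra h; push_neg at h; exact hw0 (funext h)
  set v : Fin m → AdjoinRoot f := e.symm y with hv
  set g : (Fin m → AdjoinRoot f) →ₗ[AdjoinRoot f] (Fin m → AdjoinRoot f) :=
    ((w i₀)⁻¹ • (LinearMap.proj i₀ :
      (Fin m → AdjoinRoot f) →ₗ[AdjoinRoot f] AdjoinRoot f)).smulRight v with hg
  have hgw : g w = v := by
    simp [hg, LinearMap.proj_apply, inv_mul_cancel₀ hi₀]
  have hTg : ∀ z : Fin m → AdjoinRoot f, T (g z) = g (T z) := by
    intro z
    simp only [hT, LinearMap.coe_restrictScalars, LinearMap.lsmul_apply]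
    exact (g.map_smul (AdjoinRoot.root f) z).symm
  set B : Matrix (Fin n) (Fin n) F := LinearMap.toMatrix'
    (e.toLinearMap ∘ₗ (g.restrictScalars F) ∘ₗ e.symm.toLinearMap) with hB
  have hcomm : A * B = B * A := by
    rw [hA, hB, ← LinearMap.toMatrix'_mul, ← LinearMap.toMatrix'_mul]
    congr 1
    apply LinearMap.ext; intro u
    simp only [hL, Module.End.mul_apply, LinearMap.comp_apply, LinearEquiv.coe_coe,
      LinearEquiv.symm_apply_apply, LinearMap.coe_restrictScalars]
    exact congrArg e (hTg _)
  have hmem := hWinv B hcomm x hxW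
  have hBx : B.mulVec x = y := by
    have h5 : B.mulVec x = e (g (e.symm x)) := by
      rw [hB, ← Matrix.toLin'_apply, Matrix.toLin'_toMatrix']
      simp
    rw [h5, ← hw, hgw, hv, e.apply_symm_apply]
  rwa [hBx] at hmem
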